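/- Under hypothesis (H2) (A - (0,∞)·k ⊆ int A), the set Y \ int A with direction -k also satisfies (H2), and φ_{A,k}(y) = -φ_{Y\int A, -k}(y) for all y ∈ bd A + ℝk; moreover bd A + ℝk is exactly the set of points where each of the two functions is finite. -/

import Mathlib

open Set Pointwise

noncomputable def phiF {Y : Type*} [AddCommGroup Y] [Module ℝ Y] (A : Set Y) (k : Y) (y : Y) : EReal :=
  sInf ((fun t : ℝ => (t : EReal)) '' {t : ℝ | y - t • k ∈ A})

def recCone {Y : Type*} [AddCommGroup Y] [Module ℝ Y] (A : Set Y) : Set Y :=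
  {u | ∀ a ∈ A, ∀ t : ℝ, 0 ≤ t → a + t • u ∈ A}

def algInterior {Y : Type*} [AddCommGroup Y] [Module ℝ Y] (C : Set Y) : Set Y :=
  {x ∈ C | ∀ y : Y, ∃ ε : ℝ, 0 < ε ∧ ∀ t : ℝ, 0 ≤ t → t ≤ ε → x + t • y ∈ C}

section Aux

variable {Y : Type*} [AddCommGroup Y] [Module ℝ Y] [TopologicalSpace Y]
    [IsTopologicalAddGroup Y] [ContinuousSMul ℝ Y] {A : Set Y} {k : Y}

lemma sInf_image_Ici' (t : ℝ) :
    sInf ((fun s : ℝ => (s : EReal)) '' Ici t) = (t : EReal) := by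
  refine le_antisymm (sInf_le ⟨t, self_mem_Ici, rfl⟩) (le_sInf ?_)
  rintro x ⟨s, hs, rfl⟩
  exact EReal.coe_le_coe_iff.2 hs

lemma key_mem (hAc : IsClosed A)
    (hint : ∀ a ∈ A, ∀ t : ℝ, 0 < t → a - t • k ∈ interior A)
    {b : Y} (hb : b ∈ frontier A) (r : ℝ) : b + r • k ∈ A ↔ r ≤ 0 := by
  have hbA : b ∈ A := hAc.closure_eq ▸ hb.1
  constructor
  · intro h
    by_contra hr
    push_neg at hr
    have h2 := hint _ h r hr
    simp only [add_sub_cancel_right] at h2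
    exact hb.2 h2
  · intro h
    rcases eq_or_lt_of_le h with h0 | h0
    · rw [h0]; simpa using hbA
    · have h2 := hint b hbA (-r) (by linarith)
      have e : b - (-r) • k = b + r • k := by rw [neg_smul]; abel
      rw [e] at h2
      exact interior_subset h2

lemma key_int (hAc : IsClosed A)
    (hint : ∀ a ∈ A, ∀ t : ℝ, 0 < t → a - t • k ∈ interior A)
    {b : Y} (hb : b ∈ frontier A) (r : ℝ) : b + r • k ∈ interior A ↔ r < 0 := by
  have hbA : b ∈ A := hAc.closure_eq ▸ hb.1
  constructor
  · intro h
    have hr := (key_mem hAc hint hb r).1 (interior_subset h)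
    rcases lt_or_eq_of_le hr with h' | h'
    · exact h'
    · rw [h'] at h; simp only [zero_smul, add_zero] at h
      exact absurd h hb.2
  · intro h
    have h2 := hint b hbA (-r) (by linarith)
    have e : b - (-r) • k = b + r • k := by rw [neg_smul]; abel
    rwa [e] at h2

lemma phi_val (hAc : IsClosed A)
    (hint : ∀ a ∈ A, ∀ t : ℝ, 0 < t → a - t • k ∈ interior A)
    {b : Y} (hb : b ∈ frontier A) (t : ℝ) :
    phiF A k (b + t • k) = (t : EReal) := by
  have hS : {s : ℝ | b + t • k - s • k ∈ A} = Ici t := by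
    ext s
    have e : b + t • k - s • k = b + (t - s) • k := by rw [sub_smul]; abel
    simp only [mem_setOf_eq, e, key_mem hAc hint hb, mem_Ici]
    constructor <;> intro <;> linarith
  unfold phiF
  rw [hS, sInf_image_Ici']

lemma exists_coe_of_ne {a : EReal} (h1 : a ≠ ⊤) (h2 : a ≠ ⊥) : ∃ r : ℝ, a = (r : EReal) := by
  induction a using EReal.rec with
  | bot => exact absurd rfl h2
  | coe r => exact ⟨r, rfl⟩
  | top => exact absurd rfl h1

lemma finite_eq (hAc : IsClosed A)
    (hint : ∀ a ∈ A, ∀ t : ℝ, 0 < t → a - t • k ∈ interior A) :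
    {y | phiF A k y ≠ ⊤ ∧ phiF A k y ≠ ⊥} =
      {y : Y | ∃ b ∈ frontier A, ∃ t : ℝ, y = b + t • k} := by
  ext y
  simp only [mem_setOf_eq]
  constructor
  · rintro ⟨htop, hbot⟩
    obtain ⟨m, hm⟩ := exists_coe_of_ne htop hbot
    set S : Set ℝ := {t | y - t • k ∈ A} with hSdef
    have hup : ∀ t ∈ S, ∀ t', t < t' → t' ∈ S := by
      intro t ht t' htt'
      have h2 := hint _ ht (t' - t) (by linarith)
      have e : y - t • k - (t' - t) • k = y - t' • k := by rw [sub_smul]; abel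
      rw [e] at h2
      have h3 : y - t' • k ∈ A := interior_subset h2
      exact h3
    have hlb : ∀ t ∈ S, m ≤ t := by
      intro t htS
      have h3 : phiF A k y ≤ (t : EReal) := sInf_le ⟨t, htS, rfl⟩
      rw [hm] at h3
      exact_mod_cast h3
    have hIoi : Ioi m ⊆ S := by
      intro t htm
      have hlt : phiF A k y < (t : EReal) := by rw [hm]; exact_mod_cast htm
      unfold phiF at hlt
      obtain ⟨x, ⟨s, hsS, rfl⟩, hx⟩ := sInf_lt_iff.1 hlt
      exact hup s hsS t (EReal.coe_lt_coe_iff.1 hx)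
    have hScl : IsClosed S := by
      have hc : Continuous fun t : ℝ => y - t • k :=
        continuous_const.sub (continuous_id.smul continuous_const)
      exact hAc.preimage hc
    have hmS : m ∈ S := by
      have h4 : m ∈ closure (Ioi m) := by rw [closure_Ioi]; exact self_mem_Ici
      exact hScl.closure_subset (closure_mono hIoi h4)
    have hnotint : y - m • k ∉ interior A := by
      intro hmem
      have hU : IsOpen {t : ℝ | y - t • k ∈ interior A} :=
        isOpen_interior.preimage (continuous_const.sub (continuous_id.smul continuous_const))
      obtain ⟨ε, hε, hball⟩ := Metric.isOpen_iff.1 hU m hmem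
      have h5 : m - ε / 2 ∈ S := by
        have h6 : m - ε / 2 ∈ {t : ℝ | y - t • k ∈ interior A} := by
          apply hball
          rw [Metric.mem_ball, Real.dist_eq, show m - ε / 2 - m = -(ε / 2) by ring, abs_neg,
            abs_of_pos (by linarith)]
          linarith
        have h7 : y - (m - ε / 2) • k ∈ A := interior_subset h6
        exact h7
      have := hlb _ h5
      linarith
    refine ⟨y - m • k, ?_, m, by abel⟩
    rw [hAc.frontier_eq]
    exact ⟨hmS, hnotint⟩
  · rintro ⟨b, hbfr, t, rfl⟩
    rw [phi_val hAc hint hbfr]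
    exact ⟨EReal.coe_ne_top t, EReal.coe_ne_bot t⟩

end Aux

theorem stmt_17 {Y : Type*} [AddCommGroup Y] [Module ℝ Y] [TopologicalSpace Y]
    [IsTopologicalAddGroup Y] [ContinuousSMul ℝ Y]
    (A : Set Y) (hAc : IsClosed A) (hAne : A.Nonempty) (hAp : A ≠ Set.univ)
    (k : Y) (hk : k ≠ 0) (hint : ∀ a ∈ A, ∀ t : ℝ, 0 < t → a - t • k ∈ interior A) :
    (IsClosed (interior A)ᶜ ∧ ((interior A)ᶜ : Set Y).Nonempty ∧ (interior A)ᶜ ≠ Set.univ ∧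
      ∀ b ∈ (interior A)ᶜ, ∀ t : ℝ, 0 < t → b - t • (-k) ∈ interior (interior A)ᶜ) ∧
    ({y | phiF A k y ≠ ⊤ ∧ phiF A k y ≠ ⊥} =
      {y | ∃ b ∈ frontier A, ∃ t : ℝ, y = b + t • k}) ∧
    ({y | phiF (interior A)ᶜ (-k) y ≠ ⊤ ∧ phiF (interior A)ᶜ (-k) y ≠ ⊥} =
      {y | ∃ b ∈ frontier A, ∃ t : ℝ, y = b + t • k}) ∧
    (∀ y : Y, (∃ b ∈ frontier A, ∃ t : ℝ, y = b + t • k) →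
      phiF A k y = - phiF (interior A)ᶜ (-k) y) := by
  have hBc : IsClosed ((interior A)ᶜ : Set Y) := isOpen_interior.isClosed_compl
  have hintB : ∀ b ∈ ((interior A)ᶜ : Set Y), ∀ t : ℝ, 0 < t →
      b - t • (-k) ∈ interior ((interior A)ᶜ : Set Y) := by
    intro b hb t ht
    rw [interior_compl]
    have e : b - t • (-k) = b + t • k := by rw [smul_neg]; abel
    rw [e]
    intro hmem
    have hA : b + t • k ∈ A := by
      have hsub : closure (interior A) ⊆ closure A := closure_mono interior_subset
      rw [hAc.closure_eq] at hsub
      exact hsub hmem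
    have h2 := hint _ hA t ht
    simp only [add_sub_cancel_right] at h2
    exact hb h2
  have hfr : frontier ((interior A)ᶜ : Set Y) = frontier A := by
    rw [frontier_compl]
    refine subset_antisymm frontier_interior_subset ?_
    intro b hb
    have hbA : b ∈ A := hAc.closure_eq ▸ hb.1
    have hcl : b ∈ closure (interior A) := by
      have hc : Continuous fun t : ℝ => b - t • k :=
        continuous_const.sub (continuous_id.smul continuous_const)
      have htd : Filter.Tendsto (fun t : ℝ => b - t • k) (nhdsWithin 0 (Ioi 0)) (nhds b) := by
        have h3 := hc.tendsto 0
        simp only [zero_smul, sub_zero] at h3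
        exact h3.mono_left nhdsWithin_le_nhds
      refine mem_closure_of_tendsto htd ?_
      filter_upwards [self_mem_nhdsWithin] with t ht
      exact hint b hbA t ht
    exact ⟨hcl, fun h => hb.2 (by rwa [interior_interior] at h)⟩
  refine ⟨⟨hBc, ?_, ?_, hintB⟩, finite_eq hAc hint, ?_, ?_⟩
  · obtain ⟨x, hxA⟩ : ∃ x, x ∉ A := by
      by_contra h; push_neg at h; exact hAp (eq_univ_of_forall h)
    exact ⟨x, fun h => hxA (interior_subset h)⟩
  · obtain ⟨a, haA⟩ := hAne
    intro h
    have h1 : a - (1 : ℝ) • k ∈ interior A := hint a haA 1 one_pos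
    have h2 : a - (1 : ℝ) • k ∈ ((interior A)ᶜ : Set Y) := h ▸ mem_univ _
    exact h2 h1
  · rw [finite_eq hBc hintB, hfr]
    ext y
    simp only [mem_setOf_eq]
    constructor
    · rintro ⟨b, hb, t, rfl⟩
      exact ⟨b, hb, -t, by rw [smul_neg, neg_smul]⟩
    · rintro ⟨b, hb, t, rfl⟩
      exact ⟨b, hb, -t, by rw [smul_neg, neg_smul, neg_neg]⟩
  · rintro y ⟨b, hbfr, t, rfl⟩
    rw [phi_val hAc hint hbfr t]
    have hbfrB : b ∈ frontier ((interior A)ᶜ : Set Y) := hfr ▸ hbfr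
    have e : b + t • k = b + (-t) • (-k) := by rw [neg_smul_neg]
    rw [e, phi_val hBc hintB hbfrB (-t), EReal.coe_neg, neg_neg]
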